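/- Let A be a nonempty set of qubits, j ∉ A, and let S be the Pauli word with Z on every qubit of A ∪ {j} and identity elsewhere, and P = P(A, j) the stabilizer-rotation Pauli word (Z on every qubit of A, Y on j, identity elsewhere). Then P anticommutes with S, and the π/4 Pauli rotation maps the stabilizer S to a single-qubit Pauli X: exp(i(π/4)P) · S · exp(−i(π/4)P) = −X_j, where X_j is the Pauli word with X on qubit j and identity elsewhere. -/

import Mathlib

set_option maxHeartbeats 1000000


open Matrix Complex Real

/-- The single-qubit identity matrix. -/
noncomputable def PauliI : Matrix (Fin 2) (Fin 2) ℂ := !![1, 0; 0, 1]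

/-- The single-qubit Pauli X matrix. -/
noncomputable def PauliX : Matrix (Fin 2) (Fin 2) ℂ := !![0, 1; 1, 0]

/-- The single-qubit Pauli Y matrix. -/
noncomputable def PauliY : Matrix (Fin 2) (Fin 2) ℂ := !![0, -Complex.I; Complex.I, 0]

/-- The single-qubit Pauli Z matrix. -/
noncomputable def PauliZ : Matrix (Fin 2) (Fin 2) ℂ := !![1, 0; 0, -1]

/-- The Pauli word `W(p)`: the `n`-fold Kronecker/tensor product of the single-qubit
matrices `p i`, i.e. the `2^n × 2^n` matrix with entries `W(p)(a,b) = ∏ i, p i (a i) (b i)`. -/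
noncomputable def PauliWord (n : ℕ) (p : Fin n → Matrix (Fin 2) (Fin 2) ℂ) :
    Matrix (Fin n → Fin 2) (Fin n → Fin 2) ℂ :=
  Matrix.of fun a b => ∏ i, p i (a i) (b i)

/-- The stabilizer-rotation Pauli word `P(A, j)`: Pauli Z on every qubit of `A`,
Pauli Y on qubit `j`, and identity elsewhere. -/
noncomputable def stabRot (n : ℕ) (A : Finset (Fin n)) (j : Fin n) :
    Matrix (Fin n → Fin 2) (Fin n → Fin 2) ℂ :=
  PauliWord n fun i => if i = j then PauliY else if i ∈ A then PauliZ else PauliI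

/-- The computational basis vector `e_b` indexed by the bit string `b`. -/
noncomputable def basisVec (n : ℕ) (b : Fin n → Fin 2) : (Fin n → Fin 2) → ℂ :=
  fun a => if a = b then 1 else 0

lemma PauliWord_mul (n : ℕ) (p q : Fin n → Matrix (Fin 2) (Fin 2) ℂ) :
    PauliWord n p * PauliWord n q = PauliWord n (fun i => p i * q i) := by
  ext a b
  simp only [PauliWord, Matrix.mul_apply, Matrix.of_apply]
  rw [Fintype.prod_sum]
  exact Finset.sum_congr rfl fun c _ => (Finset.prod_mul_distrib).symm

lemma PauliI_apply (x y : Fin 2) : PauliI x y = if x = y then 1 else 0 := by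
  fin_cases x <;> fin_cases y <;> simp [PauliI]

lemma PauliWord_one (n : ℕ) : PauliWord n (fun _ => PauliI) = 1 := by
  ext a b
  simp only [PauliWord, Matrix.of_apply, PauliI_apply, Matrix.one_apply, Finset.prod_boole]
  simp [funext_iff]

lemma PauliWord_smul_at (n : ℕ) (p : Fin n → Matrix (Fin 2) (Fin 2) ℂ) (j : Fin n) (c : ℂ) :
    PauliWord n (fun i => if i = j then c • p j else p i) = c • PauliWord n p := by
  ext a b
  simp only [PauliWord, Matrix.of_apply, Matrix.smul_apply, smul_eq_mul]
  rw [← Finset.mul_prod_erase Finset.univ _ (Finset.mem_univ j),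
    ← Finset.mul_prod_erase Finset.univ (fun i => p i (a i) (b i)) (Finset.mem_univ j)]
  rw [if_pos rfl, Matrix.smul_apply, smul_eq_mul, mul_assoc]
  congr 2
  refine Finset.prod_congr rfl fun i hi => ?_
  rw [if_neg (Finset.ne_of_mem_erase hi)]

lemma mulYZ : PauliY * PauliZ = Complex.I • PauliX := by
  ext i j; fin_cases i <;> fin_cases j <;>
    simp [PauliX, PauliY, PauliZ, Matrix.mul_apply, Fin.sum_univ_two]

lemma mulZY : PauliZ * PauliY = (-Complex.I) • PauliX := by
  ext i j; fin_cases i <;> fin_cases j <;>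
    simp [PauliX, PauliY, PauliZ, Matrix.mul_apply, Fin.sum_univ_two]

lemma mulXY : PauliX * PauliY = Complex.I • PauliZ := by
  ext i j; fin_cases i <;> fin_cases j <;>
    simp [PauliX, PauliY, PauliZ, Matrix.mul_apply, Fin.sum_univ_two]

lemma mulZZ : PauliZ * PauliZ = PauliI := by
  ext i j; fin_cases i <;> fin_cases j <;>
    simp [PauliI, PauliZ, Matrix.mul_apply, Fin.sum_univ_two]

lemma mulYY : PauliY * PauliY = PauliI := by
  ext i j; fin_cases i <;> fin_cases j <;>
    simp [PauliI, PauliY, Matrix.mul_apply, Fin.sum_univ_two]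

lemma mulII : PauliI * PauliI = PauliI := by
  ext i j; fin_cases i <;> fin_cases j <;>
    simp [PauliI, Matrix.mul_apply, Fin.sum_univ_two]

lemma mulIZ : PauliI * PauliZ = PauliZ := by
  ext i j; fin_cases i <;> fin_cases j <;>
    simp [PauliI, PauliZ, Matrix.mul_apply, Fin.sum_univ_two]

lemma mulXI : PauliX * PauliI = PauliX := by
  ext i j; fin_cases i <;> fin_cases j <;>
    simp [PauliI, PauliX, Matrix.mul_apply, Fin.sum_univ_two]

lemma exp_smul_of_mul_self_eq_one {𝔸 : Type*} [NormedRing 𝔸] [NormedAlgebra ℂ 𝔸]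
    [CompleteSpace 𝔸] (P : 𝔸) (hP : P * P = 1) (θ : ℝ) :
    NormedSpace.exp (((θ : ℂ) * Complex.I) • P) =
      (Complex.cos θ) • (1 : 𝔸) + (Complex.sin θ * Complex.I) • P := by
  have hP2 : P ^ 2 = 1 := by rw [sq, hP]
  have hpow_even : ∀ k : ℕ, P ^ (2 * k) = 1 := fun k => by rw [pow_mul, hP2, one_pow]
  have hpow_odd : ∀ k : ℕ, P ^ (2 * k + 1) = P := fun k => by
    rw [pow_succ, hpow_even, one_mul]
  set z : ℂ := (θ : ℂ) * Complex.I with hz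
  have hterm : ∀ n : ℕ, (((n.factorial) : ℂ)⁻¹) • (z • P) ^ n = (z ^ n / (n.factorial)) • P ^ n := by
    intro n; rw [smul_pow, smul_smul, div_eq_mul_inv, mul_comm]
  have hzeven : ∀ k : ℕ, z ^ (2 * k) = (-1) ^ k * (θ : ℂ) ^ (2 * k) := by
    intro k
    rw [hz, mul_pow, pow_mul Complex.I, Complex.I_sq, mul_comm]
  have hzodd : ∀ k : ℕ, z ^ (2 * k + 1) = ((-1) ^ k * (θ : ℂ) ^ (2 * k + 1)) * Complex.I := by
    intro k
    rw [hz, mul_pow, pow_succ Complex.I, pow_mul Complex.I, Complex.I_sq]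
    ring
  have he : (fun k : ℕ => ((2 * k).factorial : ℂ)⁻¹ • (z • P) ^ (2 * k))
      = fun k : ℕ => ((-1) ^ k * (θ : ℂ) ^ (2 * k) / (2 * k).factorial) • (1 : 𝔸) := by
    funext k
    rw [hterm, hpow_even, hzeven]
  have ho : (fun k : ℕ => ((2 * k + 1).factorial : ℂ)⁻¹ • (z • P) ^ (2 * k + 1))
      = fun k : ℕ =>
        ((-1) ^ k * (θ : ℂ) ^ (2 * k + 1) / (2 * k + 1).factorial * Complex.I) • P := by
    funext k
    rw [hterm, hpow_odd, hzodd]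
    congr 1
    ring
  have hc : HasSum (fun k : ℕ => ((2 * k).factorial : ℂ)⁻¹ • (z • P) ^ (2 * k))
      (Complex.cos θ • (1 : 𝔸)) := by
    rw [he]; exact (Complex.hasSum_cos (θ : ℂ)).smul_const (1 : 𝔸)
  have hs : HasSum (fun k : ℕ => ((2 * k + 1).factorial : ℂ)⁻¹ • (z • P) ^ (2 * k + 1))
      ((Complex.sin θ * Complex.I) • P) := by
    rw [ho]; exact ((Complex.hasSum_sin (θ : ℂ)).mul_right Complex.I).smul_const P
  rw [NormedSpace.exp_eq_tsum (𝕂 := ℂ)]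
  exact (hc.even_add_odd hs).tsum_eq

theorem main_aux (n : ℕ) (A : Finset (Fin n)) (j : Fin n) (hj : j ∉ A) :
    stabRot n A j * PauliWord n (fun i => if i ∈ insert j A then PauliZ else PauliI) =
        -(PauliWord n (fun i => if i ∈ insert j A then PauliZ else PauliI) * stabRot n A j) ∧
      NormedSpace.exp (((Real.pi / 4 : ℂ) * Complex.I) • stabRot n A j) *
            PauliWord n (fun i => if i ∈ insert j A then PauliZ else PauliI) *
          NormedSpace.exp ((-((Real.pi / 4 : ℂ) * Complex.I)) • stabRot n A j) =
        -(PauliWord n fun i => if i = j then PauliX else PauliI) := by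
  set S := PauliWord n (fun i => if i ∈ insert j A then PauliZ else PauliI) with hS
  set P := stabRot n A j with hP
  set Xj := PauliWord n (fun i => if i = j then PauliX else PauliI) with hXjdef
  have hPS : P * S = Complex.I • Xj := by
    rw [hP, hS, hXjdef, stabRot, PauliWord_mul,
      ← PauliWord_smul_at n (fun i => if i = j then PauliX else PauliI) j Complex.I]
    refine congrArg (PauliWord n) (funext fun i => ?_)
    by_cases hij : i = j
    · subst hij; simp [Finset.mem_insert, mulYZ]
    · by_cases hiA : i ∈ A <;> simp [hij, hiA, mulZZ, mulII, Finset.mem_insert]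
  have hSP : S * P = (-Complex.I) • Xj := by
    rw [hP, hS, hXjdef, stabRot, PauliWord_mul,
      ← PauliWord_smul_at n (fun i => if i = j then PauliX else PauliI) j (-Complex.I)]
    refine congrArg (PauliWord n) (funext fun i => ?_)
    by_cases hij : i = j
    · subst hij; simp [Finset.mem_insert, mulZY]
    · by_cases hiA : i ∈ A <;> simp [hij, hiA, mulZZ, mulII, Finset.mem_insert]
  have hXjP : Xj * P = Complex.I • S := by
    rw [hP, hS, hXjdef, stabRot, PauliWord_mul,
      ← PauliWord_smul_at n (fun i => if i ∈ insert j A then PauliZ else PauliI) j Complex.I]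
    refine congrArg (PauliWord n) (funext fun i => ?_)
    by_cases hij : i = j
    · subst hij; simp [Finset.mem_insert, mulXY]
    · by_cases hiA : i ∈ A <;> simp [hij, hiA, mulIZ, mulII, Finset.mem_insert]
  have hPP : P * P = 1 := by
    rw [hP, stabRot, PauliWord_mul, ← PauliWord_one n]
    refine congrArg (PauliWord n) (funext fun i => ?_)
    by_cases hij : i = j
    · subst hij; simp [mulYY]
    · by_cases hiA : i ∈ A <;> simp [hij, hiA, mulZZ, mulII]
  refine ⟨by rw [hPS, hSP]; simp, ?_⟩
  letI : SeminormedRing (Matrix (Fin n → Fin 2) (Fin n → Fin 2) ℂ) :=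
    Matrix.linftyOpSemiNormedRing
  letI : NormedRing (Matrix (Fin n → Fin 2) (Fin n → Fin 2) ℂ) := Matrix.linftyOpNormedRing
  letI : NormedAlgebra ℂ (Matrix (Fin n → Fin 2) (Fin n → Fin 2) ℂ) :=
    Matrix.linftyOpNormedAlgebra
  set s : ℝ := Real.sqrt 2 / 2 with hsdef
  have hs : (s : ℂ) * (s : ℂ) = 1 / 2 := by
    have h2c : ((Real.sqrt 2 : ℝ) : ℂ) * ((Real.sqrt 2 : ℝ) : ℂ) = 2 := by
      norm_cast
      exact Real.mul_self_sqrt (by norm_num)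
    rw [hsdef]
    push_cast
    rw [div_mul_div_comm, h2c]
    norm_num
  have hI : Complex.I * Complex.I = -1 := Complex.I_mul_I
  have hcos : Complex.cos ((Real.pi / 4 : ℝ) : ℂ) = (s : ℂ) := by
    rw [← Complex.ofReal_cos, Real.cos_pi_div_four, hsdef]
  have hsin : Complex.sin ((Real.pi / 4 : ℝ) : ℂ) = (s : ℂ) := by
    rw [← Complex.ofReal_sin, Real.sin_pi_div_four, hsdef]
  have hexp1 : NormedSpace.exp (((Real.pi / 4 : ℂ) * Complex.I) • P) =
      (s : ℂ) • (1 : Matrix (Fin n → Fin 2) (Fin n → Fin 2) ℂ) + ((s : ℂ) * Complex.I) • P := by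
    have h := exp_smul_of_mul_self_eq_one P hPP (Real.pi / 4)
    rw [hcos, hsin] at h
    rw [show ((Real.pi / 4 : ℂ) * Complex.I) = (((Real.pi / 4 : ℝ) : ℂ) * Complex.I) by
      push_cast; ring]
    exact h
  have hexp2 : NormedSpace.exp ((-((Real.pi / 4 : ℂ) * Complex.I)) • P) =
      (s : ℂ) • (1 : Matrix (Fin n → Fin 2) (Fin n → Fin 2) ℂ) +
        (-((s : ℂ) * Complex.I)) • P := by
    have h := exp_smul_of_mul_self_eq_one P hPP (-(Real.pi / 4))
    rw [show (-((Real.pi / 4 : ℂ) * Complex.I)) = ((-(Real.pi / 4 : ℝ) : ℝ) : ℂ) * Complex.I by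
      push_cast; ring]
    have hc' : Complex.cos ((-(Real.pi / 4) : ℝ) : ℂ) = (s : ℂ) := by
      rw [Complex.ofReal_neg, Complex.cos_neg, hcos]
    have hs' : Complex.sin ((-(Real.pi / 4) : ℝ) : ℂ) = -(s : ℂ) := by
      rw [Complex.ofReal_neg, Complex.sin_neg, hsin]
    rw [hc', hs', neg_mul] at h
    exact h
  rw [hexp1, hexp2]
  have expand : ∀ a b : ℂ, (a • (1 : Matrix (Fin n → Fin 2) (Fin n → Fin 2) ℂ) + b • P) * S *
        (a • 1 + (-b) • P) =
      (a * a + b * Complex.I * (-b) * Complex.I) • S +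
        (a * (-b) * (-Complex.I) + b * Complex.I * a) • Xj := by
    intro a b
    simp only [add_mul, mul_add, smul_mul_assoc, mul_smul_comm, one_mul, mul_one,
      hPS, hSP, hXjP, smul_smul]
    module
  rw [show (-(((s : ℂ)) * Complex.I)) • P = (-((s : ℂ) * Complex.I)) • P from rfl]
  rw [expand ((s : ℂ)) ((s : ℂ) * Complex.I)]
  have c1 : (s : ℂ) * (s : ℂ) + ((s : ℂ) * Complex.I) * Complex.I * (-((s : ℂ) * Complex.I)) *
      Complex.I = 0 := by
    linear_combination (-((s : ℂ) * (s : ℂ)) * (Complex.I * Complex.I - 1)) * hI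
  have c2 : (s : ℂ) * (-((s : ℂ) * Complex.I)) * (-Complex.I) +
      ((s : ℂ) * Complex.I) * Complex.I * (s : ℂ) = -1 := by
    linear_combination (2 * ((s : ℂ) * (s : ℂ))) * hI - 2 * hs
  rw [c1, c2]
  simp


/-- `P(A, j)` anticommutes with the Z-type stabilizer `S` supported on
`A ∪ {j}`, and the `π/4` rotation generated by `P(A, j)` maps `S` to `-X_j`. -/
theorem stabRot_rotation_maps_Z_stabilizer_to_X
    (n : ℕ) (A : Finset (Fin n)) (hA : A.Nonempty) (j : Fin n) (hj : j ∉ A) :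
    let S := PauliWord n fun i => if i ∈ insert j A then PauliZ else PauliI
    let P := stabRot n A j
    P * S = -(S * P) ∧
      NormedSpace.exp (((Real.pi / 4 : ℂ) * Complex.I) • P) * S *
          NormedSpace.exp ((-((Real.pi / 4 : ℂ) * Complex.I)) • P) =
        -(PauliWord n fun i => if i = j then PauliX else PauliI) := by
  intro S P
  exact main_aux n A j hj
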